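/- Let K = ℚ(ζ₅) with ring of integers 𝓞, let σ : K → ℂ be the embedding with σ(ζ₅) = exp(4πi/5), and let S = {z ∈ 𝓞 : |σ(z)| ≤ 1}. For every z ∈ S there exists an integer j with 0 ≤ j ≤ 9 such that z + (−ζ₅³)^j ∈ S; here −ζ₅³ is a primitive tenth root of unity in 𝓞. In particular, for every z ∈ S there exists z' ∈ S with z' ≠ z and such that z' − z is a tenth root of unity, so |ι(z') − ι(z)| = 1 for the embedding ι with ι(ζ₅) = exp(2πi/5). -/

import Mathlib

open NumberField

open Complex in
lemma key_tenth (w : ℂ) (hw : ‖w‖ ≤ 1) :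
    ∃ u : ℂ, u ^ 10 = 1 ∧ ‖w + u‖ ≤ 1 := by
  have hπ : (0:ℝ) < Real.pi := Real.pi_pos
  set θ := (-w).arg with hθ
  set r := ‖w‖ with hr
  have hwr : -w = (r : ℂ) * Complex.exp ((θ:ℂ) * I) := by
    rw [hθ, hr, show ‖w‖ = ‖-w‖ from (norm_neg w).symm]
    exact (Complex.norm_mul_exp_arg_mul_I (-w)).symm
  set k : ℤ := round (θ / (Real.pi / 5)) with hk
  have h5 : (0:ℝ) < Real.pi / 5 := by positivity
  have hkθ : |θ - k * (Real.pi/5)| ≤ Real.pi / 10 := by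
    have h1 := abs_sub_round (θ / (Real.pi / 5))
    have h2 : θ - k * (Real.pi/5) = (θ/(Real.pi/5) - (k:ℝ)) * (Real.pi/5) := by
      field_simp
    rw [← hk] at h1
    rw [h2, abs_mul, abs_of_pos h5]
    have := mul_le_mul_of_nonneg_right h1 h5.le
    linarith
  refine ⟨Complex.exp (((k : ℝ) * (Real.pi/5) : ℝ) * I), ?_, ?_⟩
  · rw [← Complex.exp_nat_mul]
    rw [show ((10:ℕ):ℂ) * ((((k : ℝ) * (Real.pi/5) : ℝ):ℂ) * I) = (k:ℂ) * (2 * Real.pi * I) by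
      push_cast; ring]
    exact Complex.exp_int_mul_two_pi_mul_I k
  · set c : ℝ := (k:ℝ) * (Real.pi/5) - θ with hc
    have hfac : w + Complex.exp ((((k : ℝ) * (Real.pi/5) : ℝ):ℂ) * I)
        = Complex.exp ((θ:ℂ) * I) * (Complex.exp ((c:ℂ) * I) - (r:ℂ)) := by
      rw [mul_sub, ← Complex.exp_add]
      rw [show (θ:ℂ) * I + (c:ℂ) * I = (((k : ℝ) * (Real.pi/5) : ℝ):ℂ) * I by
        push_cast [hc]; ring]
      linear_combination -hwr
    rw [hfac, norm_mul, Complex.norm_exp_ofReal_mul_I, one_mul]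
    have hre : (Complex.exp ((c:ℂ) * I) - (r:ℂ)).re = Real.cos c - r := by
      simp [Complex.exp_ofReal_mul_I_re]
    have him : (Complex.exp ((c:ℂ) * I) - (r:ℂ)).im = Real.sin c := by
      simp [Complex.exp_ofReal_mul_I_im]
    have hsq : ‖Complex.exp ((c:ℂ) * I) - (r:ℂ)‖^2
        = (Real.cos c - r)^2 + (Real.sin c)^2 := by
      rw [Complex.sq_norm, Complex.normSq_apply, hre, him]; ring
    have hcabs : |c| ≤ Real.pi / 10 := by
      rw [hc, abs_sub_comm]; exact hkθ
    have hcos : (1:ℝ)/2 ≤ Real.cos c := by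
      rw [← Real.cos_abs, ← Real.cos_pi_div_three]
      exact Real.cos_le_cos_of_nonneg_of_le_pi (abs_nonneg c) (by linarith) (by linarith)
    have h0r : 0 ≤ r := norm_nonneg w
    have hsc := Real.sin_sq_add_cos_sq c
    have hle : ‖Complex.exp ((c:ℂ) * I) - (r:ℂ)‖^2 ≤ 1 := by
      rw [hsq]; nlinarith
    nlinarith [norm_nonneg (Complex.exp ((c:ℂ) * I) - (r:ℂ))]


/-- For `K = ℚ(ζ₅)`, embeddings `ι, σ` as in the paper, and `S = {z ∈ 𝓞 | |σ z| ≤ 1}`: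
for every `z ∈ S` there exists `0 ≤ j ≤ 9` with `z + (-ζ₅ ^ 3) ^ j ∈ S`; in particular there
is `z' ∈ S`, `z' ≠ z`, with `z' - z` a tenth root of unity, so `|ι z' - ι z| = 1`. -/
theorem stmt_6 (K : Type*) [Field K] [NumberField K] [IsCyclotomicExtension {5} ℚ K]
    (ζ : 𝓞 K) (hζ : IsPrimitiveRoot (ζ : K) 5)
    (ι σ : K →+* ℂ)
    (hι : ι (ζ : K) = Complex.exp (2 * Real.pi * Complex.I / 5))
    (hσ : σ (ζ : K) = Complex.exp (4 * Real.pi * Complex.I / 5))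
    (S : Set (𝓞 K)) (hS : S = {z : 𝓞 K | ‖σ (z : K)‖ ≤ 1})
    (z : 𝓞 K) (hz : z ∈ S) :
    (∃ j : ℕ, j ≤ 9 ∧ z + (-ζ ^ 3) ^ j ∈ S) ∧
    (∃ z' ∈ S, z' ≠ z ∧ (z' - z) ^ 10 = 1 ∧
      ‖ι (z' : K) - ι (z : K)‖ = 1) := by
  have hζ5 : (ζ : K) ^ 5 = 1 := hζ.pow_eq_one
  -- the tenth power of -ζ^3 is 1
  have hη10K : ((-ζ ^ 3 : 𝓞 K) : K) ^ 10 = 1 := by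
    push_cast
    calc (-(ζ:K) ^ 3) ^ 10 = ((ζ:K) ^ 5) ^ 6 := by ring
      _ = 1 := by rw [hζ5, one_pow]
  have hη10 : (-ζ ^ 3 : 𝓞 K) ^ 10 = 1 := by
    apply RingOfIntegers.ext
    push_cast
    exact_mod_cast hη10K
  -- σ(-ζ^3) is a primitive tenth root of unity
  have hval : σ ((-ζ ^ 3 : 𝓞 K) : K) = -(σ ((ζ : 𝓞 K) : K)) ^ 3 := by
    push_cast
    rw [map_neg, map_pow]
  have e1 : Complex.exp (2 * Real.pi * Complex.I * (7 / 10))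
      = -(Complex.exp (4 * Real.pi * Complex.I / 5)) ^ 3 := by
    rw [← Complex.exp_nat_mul,
      show ((3:ℕ):ℂ) * (4 * Real.pi * Complex.I / 5)
        = Real.pi * Complex.I + 2 * Real.pi * Complex.I * (7 / 10) from by push_cast; ring,
      Complex.exp_add, Complex.exp_pi_mul_I]
    ring
  have hprim : IsPrimitiveRoot (σ ((-ζ ^ 3 : 𝓞 K) : K)) 10 := by
    rw [hval, hσ, ← e1]
    exact Complex.isPrimitiveRoot_exp_of_coprime 7 10 (by norm_num) (by norm_num)
  -- find the right power
  rw [hS] at hz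
  obtain ⟨u, hu10, huw⟩ := key_tenth (σ (z : K)) hz
  obtain ⟨i, hi10, hiu⟩ := hprim.eq_pow_of_pow_eq_one hu10
  have hmem : z + (-ζ ^ 3) ^ i ∈ S := by
    rw [hS]
    have hco : ((z + (-ζ ^ 3) ^ i : 𝓞 K) : K) = (z : K) + ((-ζ ^ 3 : 𝓞 K) : K) ^ i := by
      push_cast; ring
    show ‖σ ((z + (-ζ ^ 3) ^ i : 𝓞 K) : K)‖ ≤ 1
    rw [hco, map_add, map_pow, hiu]
    exact huw
  have h10' : ((-ζ ^ 3 : 𝓞 K) ^ i) ^ 10 = 1 := by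
    rw [← pow_mul, mul_comm, pow_mul, hη10, one_pow]
  refine ⟨⟨i, Nat.lt_succ_iff.mp hi10, hmem⟩, ⟨z + (-ζ ^ 3) ^ i, hmem, ?_, ?_, ?_⟩⟩
  · intro h
    have h0 : (-ζ ^ 3 : 𝓞 K) ^ i = 0 := by
      have := add_eq_left.mp h
      exact this
    rw [h0] at h10'
    simp at h10'
  · rw [add_sub_cancel_left]
    exact h10'
  · have hsub : ι (((z + (-ζ ^ 3) ^ i : 𝓞 K)) : K) - ι ((z : 𝓞 K) : K)
        = ι (((-ζ ^ 3 : 𝓞 K) ^ i : 𝓞 K) : K) := by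
      rw [← map_sub]
      congr 1
      push_cast
      ring
    rw [hsub]
    have hK : ((((-ζ ^ 3 : 𝓞 K) ^ i : 𝓞 K)) : K) ^ 10 = 1 := by
      exact_mod_cast congrArg (fun t : 𝓞 K => (t : K)) h10'
    have hpow : (ι (((-ζ ^ 3 : 𝓞 K) ^ i : 𝓞 K) : K)) ^ 10 = 1 := by
      rw [← map_pow, hK, map_one]
    exact Complex.norm_eq_one_of_pow_eq_one hpow (by norm_num)
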